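/- Identity for the Barnes-related function: $\psi^{(-2)}(z)=\int_0^z\log\Gamma(x)\,dx$ satisfies $\psi^{(-2)}(z)=\tfrac{z(1-z)}{2}+\tfrac{z}{2}\log 2\pi + z\log\Gamma(z)-\log G(1+z)$ for $0<z$, where $G$ is the Barnes G-function. -/

import Mathlib

open Real

/-- The antiderivative of `log ∘ Γ`: `ψ⁽⁻²⁾(z) = ∫₀ᶻ log Γ(x) dx`. -/
noncomputable def psiM2 (z : ℝ) : ℝ := ∫ t in (0:ℝ)..z, Real.log (Real.Gamma t)

/-- The Barnes G-function (real values), defined by its Weierstrass product: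
`G(1+z) = (2π)^(z/2) exp(-(z+z²(1+γ))/2) ∏_{k≥1} (1+z/k)^k exp(z²/(2k) - z)`,
where `γ` is the Euler–Mascheroni constant.  It satisfies `G(1) = 1` and
`G(z+1) = Γ(z) G(z)`. -/
noncomputable def barnesG (w : ℝ) : ℝ :=
  (2 * π) ^ ((w - 1) / 2) *
    Real.exp (-((w - 1) + (w - 1) ^ 2 * (1 + Real.eulerMascheroniConstant)) / 2) *
    ∏' k : ℕ, (1 + (w - 1) / ((k : ℝ) + 1)) ^ (k + 1) *
      Real.exp ((w - 1) ^ 2 / (2 * ((k : ℝ) + 1)) - (w - 1))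

section PsiAuxSection

open MeasureTheory intervalIntegral Set Filter Topology

namespace PsiAux

lemma integral_inv_one_add {t : ℝ} (ht : 0 ≤ t) :
    ∫ s in (0:ℝ)..t, (1 + s)⁻¹ = Real.log (1 + t) := by
  have hpos : ∀ s ∈ Set.uIcc (0:ℝ) t, (0:ℝ) < 1 + s := by
    intro s hs
    rw [Set.uIcc_of_le ht] at hs
    linarith [hs.1]
  have h := intervalIntegral.integral_eq_sub_of_hasDerivAt
    (f := fun s => Real.log (1 + s)) (f' := fun s => (1 + s)⁻¹)
    (fun s hs => by
      have h1 : HasDerivAt (fun s : ℝ => 1 + s) 1 s := (hasDerivAt_id s).const_add 1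
      simpa [one_div] using h1.log (hpos s hs).ne') ?_
  · simpa using h
  · apply ContinuousOn.intervalIntegrable
    exact ContinuousOn.inv₀ (by fun_prop) (fun s hs => (hpos s hs).ne')

lemma q_nonneg {t : ℝ} (ht : 0 ≤ t) : 0 ≤ t - Real.log (1 + t) := by
  have := Real.log_le_sub_one_of_pos (show (0:ℝ) < 1 + t by linarith)
  linarith

lemma q_le {t : ℝ} (ht : 0 ≤ t) : t - Real.log (1 + t) ≤ t ^ 2 / 2 := by
  have h1 : ∫ s in (0:ℝ)..t, (1 - s) ≤ ∫ s in (0:ℝ)..t, (1 + s)⁻¹ := by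
    apply intervalIntegral.integral_mono_on ht
    · exact (continuous_const.sub continuous_id).intervalIntegrable _ _
    · apply ContinuousOn.intervalIntegrable
      apply ContinuousOn.inv₀ (by fun_prop)
      intro s hs
      rw [Set.uIcc_of_le ht] at hs
      nlinarith [hs.1]
    · intro s hs
      have hs0 : 0 ≤ s := hs.1
      have hpos : (0:ℝ) < 1 + s := by linarith
      rw [← sub_nonneg]
      have : (1 + s)⁻¹ - (1 - s) = s ^ 2 / (1 + s) := by field_simp; ring
      rw [this]; positivity
  have h2 : ∫ s in (0:ℝ)..t, (1 - s) = t - t ^ 2 / 2 := by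
    rw [intervalIntegral.integral_sub intervalIntegrable_const intervalIntegral.intervalIntegrable_id]
    simp [integral_id]
  rw [integral_inv_one_add ht, h2] at h1
  linarith

lemma q_ge {t : ℝ} (ht : 0 ≤ t) : t ^ 2 / 2 - t ^ 3 / 3 ≤ t - Real.log (1 + t) := by
  have h1 : ∫ s in (0:ℝ)..t, (1 + s)⁻¹ ≤ ∫ s in (0:ℝ)..t, (1 - s + s ^ 2) := by
    apply intervalIntegral.integral_mono_on ht
    · apply ContinuousOn.intervalIntegrable
      apply ContinuousOn.inv₀ (by fun_prop)
      intro s hs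
      rw [Set.uIcc_of_le ht] at hs
      nlinarith [hs.1]
    · exact (by fun_prop : Continuous fun s : ℝ => 1 - s + s ^ 2).intervalIntegrable _ _
    · intro s hs
      have hs0 : 0 ≤ s := hs.1
      have hpos : (0:ℝ) < 1 + s := by linarith
      rw [← sub_nonneg]
      have : (1 - s + s ^ 2) - (1 + s)⁻¹ = s ^ 3 / (1 + s) := by field_simp; ring
      rw [this]; positivity
  have h2 : ∫ s in (0:ℝ)..t, (1 - s + s ^ 2) = t - t ^ 2 / 2 + t ^ 3 / 3 := by
    rw [intervalIntegral.integral_add (intervalIntegrable_const.sub intervalIntegral.intervalIntegrable_id)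
      ((continuous_pow 2).intervalIntegrable _ _),
      intervalIntegral.integral_sub intervalIntegrable_const intervalIntegral.intervalIntegrable_id]
    simp [integral_id, integral_pow]
    ring
  rw [integral_inv_one_add ht, h2] at h1
  linarith


noncomputable def aa (z : ℝ) (k : ℕ) : ℝ := z / ((k : ℝ) + 1) - Real.log (1 + z / ((k : ℝ) + 1))

noncomputable def ll (z : ℝ) (k : ℕ) : ℝ :=
  ((k : ℝ) + 1) * Real.log (1 + z / ((k : ℝ) + 1)) + z ^ 2 / (2 * ((k : ℝ) + 1)) - z

lemma kpos (k : ℕ) : (0:ℝ) < (k : ℝ) + 1 := by positivity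

lemma summable_base : Summable (fun k : ℕ => 1 / ((k : ℝ) + 1) ^ 2) := by
  have := Real.summable_one_div_nat_pow.mpr (le_refl 2)
  exact_mod_cast (summable_nat_add_iff 1).mpr this |>.congr (fun k => by push_cast; ring)

lemma aa_nonneg {z : ℝ} (hz : 0 ≤ z) (k : ℕ) : 0 ≤ aa z k :=
  q_nonneg (by positivity)

lemma aa_le {z : ℝ} (hz : 0 ≤ z) (k : ℕ) : aa z k ≤ z ^ 2 / 2 * (1 / ((k : ℝ) + 1) ^ 2) := by
  have h := q_le (t := z / ((k : ℝ) + 1)) (by positivity)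
  have hk := kpos k
  calc aa z k ≤ (z / ((k : ℝ) + 1)) ^ 2 / 2 := h
    _ = z ^ 2 / 2 * (1 / ((k : ℝ) + 1) ^ 2) := by
        rw [div_pow, div_div, mul_one_div, div_div, mul_comm (((k:ℝ)+1)^2) 2]

lemma ll_nonneg {z : ℝ} (hz : 0 ≤ z) (k : ℕ) : 0 ≤ ll z k := by
  have h := q_le (t := z / ((k : ℝ) + 1)) (by positivity)
  have hk := kpos k
  have : ll z k = ((k:ℝ) + 1) * ((z / ((k : ℝ) + 1)) ^ 2 / 2 -
      (z / ((k : ℝ) + 1) - Real.log (1 + z / ((k : ℝ) + 1)))) := by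
    unfold ll; field_simp; ring
  rw [this]
  have := sub_nonneg.mpr h
  positivity

lemma ll_le {z : ℝ} (hz : 0 ≤ z) (k : ℕ) : ll z k ≤ z ^ 3 / 3 * (1 / ((k : ℝ) + 1) ^ 2) := by
  have h := q_ge (t := z / ((k : ℝ) + 1)) (by positivity)
  have hk := kpos k
  have heq : ll z k = ((k:ℝ) + 1) * ((z / ((k : ℝ) + 1)) ^ 2 / 2 -
      (z / ((k : ℝ) + 1) - Real.log (1 + z / ((k : ℝ) + 1)))) := by
    unfold ll; field_simp; ring
  rw [heq]
  have h2 : (z / ((k : ℝ) + 1)) ^ 2 / 2 - (z / ((k : ℝ) + 1) - Real.log (1 + z / ((k : ℝ) + 1)))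
      ≤ (z / ((k : ℝ) + 1)) ^ 3 / 3 := by linarith
  calc ((k:ℝ) + 1) * ((z / ((k : ℝ) + 1)) ^ 2 / 2 -
      (z / ((k : ℝ) + 1) - Real.log (1 + z / ((k : ℝ) + 1))))
      ≤ ((k:ℝ) + 1) * ((z / ((k : ℝ) + 1)) ^ 3 / 3) := by
        exact mul_le_mul_of_nonneg_left h2 (by positivity)
    _ = z ^ 3 / 3 * (1 / ((k : ℝ) + 1) ^ 2) := by
        have hk' : ((k:ℝ)+1) ≠ 0 := (kpos k).ne'
        field_simp

lemma summable_aa {z : ℝ} (hz : 0 ≤ z) : Summable (aa z) :=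
  Summable.of_nonneg_of_le (aa_nonneg hz) (aa_le hz) (summable_base.mul_left _)

lemma summable_ll {z : ℝ} (hz : 0 ≤ z) : Summable (ll z) :=
  Summable.of_nonneg_of_le (ll_nonneg hz) (ll_le hz) (summable_base.mul_left _)

lemma sum_aa {x : ℝ} (hx : 0 < x) (n : ℕ) :
    ∑ k ∈ Finset.range n, aa x k =
      Real.BohrMollerup.logGammaSeq x n + Real.log x + x * ((harmonic n : ℝ) - Real.log n) := by
  have hlog : ∀ k : ℕ, Real.log (1 + x / ((k : ℝ) + 1)) =
      Real.log (x + ((k : ℝ) + 1)) - Real.log ((k : ℝ) + 1) := by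
    intro k
    rw [← Real.log_div (by positivity) (kpos k).ne']
    congr 1
    field_simp
    ring
  simp only [aa, hlog]
  rw [Real.BohrMollerup.logGammaSeq]
  have hfac : Real.log (Nat.factorial n : ℝ) = ∑ k ∈ Finset.range n, Real.log ((k : ℝ) + 1) := by
    rw [← Finset.prod_range_add_one_eq_factorial]
    push_cast
    rw [Real.log_prod]
    intro k _
    exact (kpos k).ne'
  have hharm : (harmonic n : ℝ) = ∑ k ∈ Finset.range n, 1 / ((k : ℝ) + 1) := by
    rw [harmonic]
    push_cast
    simp [one_div]
  have hshift : ∑ m ∈ Finset.range (n + 1), Real.log (x + m) =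
      Real.log x + ∑ k ∈ Finset.range n, Real.log (x + ((k : ℝ) + 1)) := by
    rw [Finset.sum_range_succ']
    push_cast
    simp [add_comm]
  rw [hfac, hharm, hshift]
  rw [Finset.sum_sub_distrib, Finset.sum_sub_distrib]
  have hx1 : x * (∑ k ∈ Finset.range n, 1 / ((k:ℝ) + 1) - Real.log n)
      = (∑ k ∈ Finset.range n, x / ((k:ℝ) + 1)) - x * Real.log n := by
    rw [mul_sub, Finset.mul_sum]
    simp_rw [mul_one_div]
  rw [hx1]
  ring


lemma hasSum_aa {x : ℝ} (hx : 0 < x) :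
    HasSum (aa x) (Real.log (Real.Gamma x) + Real.log x + Real.eulerMascheroniConstant * x) := by
  have hsum := summable_aa hx.le
  have h1 : Tendsto (fun n => ∑ k ∈ Finset.range n, aa x k) atTop (𝓝 (∑' k, aa x k)) :=
    hsum.hasSum.tendsto_sum_nat
  have h2 : Tendsto (fun n => ∑ k ∈ Finset.range n, aa x k) atTop
      (𝓝 (Real.log (Real.Gamma x) + Real.log x + Real.eulerMascheroniConstant * x)) := by
    simp_rw [sum_aa hx]
    have ha := Real.BohrMollerup.tendsto_log_gamma hx
    have hb := Real.tendsto_harmonic_sub_log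
    have := (ha.add (tendsto_const_nhds (x := Real.log x))).add (hb.const_mul x)
    simpa [mul_comm] using this
  have := tendsto_nhds_unique h1 h2
  rw [← this]
  exact hsum.hasSum


lemma continuousOn_aa (z : ℝ) (hz : 0 ≤ z) (k : ℕ) :
    ContinuousOn (fun x => aa x k) (Set.Icc 0 z) := by
  unfold aa
  have hk := kpos k
  apply ContinuousOn.sub (by fun_prop)
  apply ContinuousOn.log (by fun_prop)
  intro x hx
  have : 0 ≤ x / ((k:ℝ)+1) := div_nonneg hx.1 hk.le
  positivity

lemma integral_aa {z : ℝ} (hz : 0 ≤ z) (k : ℕ) :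
    ∫ x in (0:ℝ)..z, aa x k = z * aa z k - ll z k := by
  have hk := kpos k
  have hF : ∀ x ∈ Set.uIcc (0:ℝ) z, HasDerivAt
      (fun x => x ^ 2 / (2 * ((k:ℝ)+1)) + x - ((k:ℝ) + 1 + x) * Real.log (1 + x / ((k:ℝ)+1)))
      (aa x k) x := by
    intro x hx
    rw [Set.uIcc_of_le hz] at hx
    have hx0 : 0 ≤ x := hx.1
    have hpos : 0 < 1 + x / ((k:ℝ)+1) := by
      have : 0 ≤ x / ((k:ℝ)+1) := div_nonneg hx0 hk.le
      linarith
    have h1 : HasDerivAt (fun x : ℝ => 1 + x / ((k:ℝ)+1)) (((k:ℝ)+1)⁻¹) x := by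
      simpa [one_div] using ((hasDerivAt_id x).div_const ((k:ℝ)+1)).const_add 1
    have h2 : HasDerivAt (fun x : ℝ => Real.log (1 + x / ((k:ℝ)+1)))
        (((k:ℝ)+1)⁻¹ / (1 + x / ((k:ℝ)+1))) x := h1.log hpos.ne'
    have h3 : HasDerivAt (fun x : ℝ => ((k:ℝ) + 1 + x) * Real.log (1 + x / ((k:ℝ)+1)))
        (1 * Real.log (1 + x / ((k:ℝ)+1)) +
          ((k:ℝ) + 1 + x) * (((k:ℝ)+1)⁻¹ / (1 + x / ((k:ℝ)+1)))) x :=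
      (((hasDerivAt_id x).const_add ((k:ℝ)+1))).mul h2
    have h4 : HasDerivAt (fun x : ℝ => x ^ 2 / (2 * ((k:ℝ)+1)) + x)
        (x / ((k:ℝ)+1) + 1) x := by
      have := ((hasDerivAt_pow 2 x).div_const (2 * ((k:ℝ)+1))).add (hasDerivAt_id x)
      refine this.congr_deriv ?_
      norm_num
      field_simp
    have h5 := h4.sub h3
    refine h5.congr_deriv ?_
    have hce : ((k:ℝ) + 1 + x) * (((k:ℝ)+1)⁻¹ / (1 + x / ((k:ℝ)+1))) = 1 := by
      rw [mul_comm, div_mul_eq_mul_div, div_eq_one_iff_eq (by positivity)]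
      field_simp
    rw [hce]
    unfold aa
    ring
  have hint : IntervalIntegrable (fun x => aa x k) volume 0 z := by
    apply ContinuousOn.intervalIntegrable
    rw [Set.uIcc_of_le hz]
    exact continuousOn_aa z hz k
  have := intervalIntegral.integral_eq_sub_of_hasDerivAt hF hint
  rw [this]
  unfold aa ll
  have hk' : ((k:ℝ)+1) ≠ 0 := hk.ne'
  norm_num
  field_simp
  ring

lemma integrableOn_log_Ioc {z : ℝ} (hz : 0 < z) : IntegrableOn Real.log (Set.Ioc 0 z) := by
  have hg : IntegrableOn (fun x : ℝ => 2 * x ^ (-(2⁻¹:ℝ)) + z) (Set.Ioc 0 z) := by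
    apply Integrable.add
    · have h := (intervalIntegral.intervalIntegrable_rpow' (a := 0) (b := z)
        (r := -(2⁻¹:ℝ)) (by norm_num)).const_mul 2
      rwa [intervalIntegrable_iff_integrableOn_Ioc_of_le hz.le] at h
    · exact integrableOn_const measure_Ioc_lt_top.ne
  apply Integrable.mono' hg
  · exact (Real.measurable_log.aestronglyMeasurable).restrict
  · filter_upwards [ae_restrict_mem measurableSet_Ioc] with x hx
    have hx0 : 0 < x := hx.1
    rcases le_or_gt x 1 with hx1 | hx1
    · have hy : 0 < x ^ ((2⁻¹:ℝ)) := Real.rpow_pos_of_pos hx0 _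
      have hlog : Real.log x ≤ 0 := Real.log_nonpos hx0.le hx1
      have h1 : -Real.log x = 2 * -Real.log (x ^ ((2⁻¹:ℝ))) := by
        rw [Real.log_rpow hx0]; ring
      have h2 : -Real.log (x ^ ((2⁻¹:ℝ))) ≤ (x ^ ((2⁻¹:ℝ)))⁻¹ := by
        have := Real.log_le_sub_one_of_pos (inv_pos.mpr hy)
        rw [Real.log_inv] at this
        linarith [inv_pos.mpr hy]
      have h3 : (x ^ ((2⁻¹:ℝ)))⁻¹ = x ^ (-(2⁻¹:ℝ)) := by
        rw [← Real.rpow_neg hx0.le]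
      rw [Real.norm_eq_abs, abs_of_nonpos hlog]
      rw [h1]
      have : (0:ℝ) ≤ x ^ (-(2⁻¹:ℝ)) := (Real.rpow_pos_of_pos hx0 _).le
      nlinarith [h2, h3]
    · rw [Real.norm_eq_abs, abs_of_nonneg (Real.log_nonneg hx1.le)]
      have h1 : Real.log x ≤ x - 1 := Real.log_le_sub_one_of_pos hx0
      have h2 : x ≤ z := hx.2
      have : (0:ℝ) ≤ x ^ (-(2⁻¹:ℝ)) := (Real.rpow_pos_of_pos hx0 _).le
      nlinarith

lemma integral_log0 {z : ℝ} (hz : 0 < z) :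
    ∫ x in (0:ℝ)..z, Real.log x = z * Real.log z - z := by
  have hcont : ContinuousOn (fun x : ℝ => x * Real.log x - x) (Set.Icc 0 z) :=
    (Real.continuous_mul_log.sub continuous_id).continuousOn
  have hderiv : ∀ x ∈ Set.Ioo (0:ℝ) z, HasDerivWithinAt
      (fun x : ℝ => x * Real.log x - x) (Real.log x) (Set.Ioi x) x := by
    intro x hx
    have := (Real.hasDerivAt_mul_log hx.1.ne').sub (hasDerivAt_id x)
    exact (this.congr_deriv (by simp)).hasDerivWithinAt
  have hint : IntervalIntegrable Real.log volume 0 z := by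
    rw [intervalIntegrable_iff_integrableOn_Ioc_of_le hz.le]
    exact integrableOn_log_Ioc hz
  have := intervalIntegral.integral_eq_sub_of_hasDeriv_right_of_le hz.le hcont hderiv hint
  rw [this]
  simp


lemma aa_mono_le {z x : ℝ} (hx : 0 ≤ x) (hxz : x ≤ z) (k : ℕ) :
    aa x k ≤ z ^ 2 / 2 * (1 / ((k : ℝ) + 1) ^ 2) := by
  refine (aa_le hx k).trans ?_
  have : x ^ 2 ≤ z ^ 2 := by nlinarith
  have hk : (0:ℝ) < 1 / ((k : ℝ) + 1) ^ 2 := by positivity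
  nlinarith

lemma tsum_aa_le {z x : ℝ} (hx : 0 ≤ x) (hxz : x ≤ z) :
    ∑' k, aa x k ≤ z ^ 2 / 2 * ∑' k : ℕ, 1 / ((k : ℝ) + 1) ^ 2 := by
  rw [← Summable.tsum_mul_left _ summable_base]
  exact Summable.tsum_le_tsum (fun k => aa_mono_le hx hxz k) (summable_aa hx) (summable_base.mul_left _)

lemma continuousOn_logGamma : ContinuousOn (fun x => Real.log (Real.Gamma x)) (Set.Ioi (0:ℝ)) := by
  intro x hx
  apply ContinuousAt.continuousWithinAt
  refine ((Real.differentiableAt_Gamma fun m => ?_).continuousAt).log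
    (Real.Gamma_pos_of_pos hx).ne'
  have : (0:ℝ) < x + m := by
    have := Nat.cast_nonneg (α := ℝ) m
    have hx' : (0:ℝ) < x := hx
    linarith
  linarith

lemma integrableOn_logGamma {z : ℝ} (hz : 0 < z) :
    IntegrableOn (fun x => Real.log (Real.Gamma x)) (Set.Ioc 0 z) := by
  set γ := Real.eulerMascheroniConstant
  set c := ∑' k : ℕ, 1 / ((k : ℝ) + 1) ^ 2 with hc
  have hγ : 0 < γ := lt_trans one_half_pos Real.one_half_lt_eulerMascheroniConstant
  have hcpos : 0 ≤ c := tsum_nonneg fun k => by positivity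
  have hg : IntegrableOn (fun x : ℝ => |Real.log x| + (γ * z + z ^ 2 / 2 * c)) (Set.Ioc 0 z) := by
    exact ((integrableOn_log_Ioc hz).abs).add (integrableOn_const measure_Ioc_lt_top.ne)
  apply Integrable.mono' hg
  · exact ((continuousOn_logGamma.mono Set.Ioc_subset_Ioi_self).aestronglyMeasurable
      measurableSet_Ioc)
  · filter_upwards [ae_restrict_mem measurableSet_Ioc] with x hx
    have hx0 : 0 < x := hx.1
    have hxz : x ≤ z := hx.2
    have hT := (hasSum_aa hx0).tsum_eq
    have hTnn : 0 ≤ ∑' k, aa x k := tsum_nonneg fun k => aa_nonneg hx0.le k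
    have hTle := tsum_aa_le hx0.le hxz
    rw [Real.norm_eq_abs, abs_le]
    constructor
    · have : -Real.log x - γ * x ≤ Real.log (Real.Gamma x) := by linarith
      have habs : -|Real.log x| ≤ Real.log x ∧ Real.log x ≤ |Real.log x| :=
        ⟨neg_abs_le _, le_abs_self _⟩
      nlinarith [habs.1, habs.2]
    · have : Real.log (Real.Gamma x) = ∑' k, aa x k - Real.log x - γ * x := by linarith
      rw [this]
      have habs := neg_abs_le (Real.log x)
      nlinarith [mul_nonneg hγ.le hx0.le]

lemma integrableOn_aa {z : ℝ} (hz : 0 ≤ z) (k : ℕ) :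
    IntegrableOn (fun x => aa x k) (Set.Ioc 0 z) :=
  ((continuousOn_aa z hz k).integrableOn_Icc).mono_set Set.Ioc_subset_Icc_self

lemma interchange {z : ℝ} (hz : 0 < z) :
    ∑' k : ℕ, ∫ x in Set.Ioc (0:ℝ) z, aa x k = ∫ x in Set.Ioc (0:ℝ) z, ∑' k, aa x k := by
  apply MeasureTheory.integral_tsum_of_summable_integral_norm
    (fun k => integrableOn_aa hz.le k)
  have hle : ∀ k : ℕ, ∫ x in Set.Ioc (0:ℝ) z, ‖aa x k‖ ≤ z ^ 2 / 2 * z * (1 / ((k : ℝ) + 1) ^ 2) := by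
    intro k
    have hb : ∀ x ∈ Set.Ioc (0:ℝ) z, ‖aa x k‖ ≤ z ^ 2 / 2 * (1 / ((k : ℝ) + 1) ^ 2) := by
      intro x hx
      rw [Real.norm_eq_abs, abs_of_nonneg (aa_nonneg hx.1.le k)]
      exact aa_mono_le hx.1.le hx.2 k
    calc ∫ x in Set.Ioc (0:ℝ) z, ‖aa x k‖
        ≤ ∫ _x in Set.Ioc (0:ℝ) z, z ^ 2 / 2 * (1 / ((k : ℝ) + 1) ^ 2) := by
          apply setIntegral_mono_on ((integrableOn_aa hz.le k).norm)
            (integrableOn_const measure_Ioc_lt_top.ne) measurableSet_Ioc hb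
      _ = z ^ 2 / 2 * z * (1 / ((k : ℝ) + 1) ^ 2) := by
          rw [setIntegral_const, Real.volume_real_Ioc_of_le hz.le, smul_eq_mul]
          ring
  exact Summable.of_nonneg_of_le
    (fun k => integral_nonneg fun x => norm_nonneg _)
    hle (summable_base.mul_left (z ^ 2 / 2 * z))

lemma psiM2_series {z : ℝ} (hz : 0 < z) :
    (∫ x in (0:ℝ)..z, Real.log (Real.Gamma x)) =
      (∑' k : ℕ, (z * aa z k - ll z k)) - (z * Real.log z - z)
        - Real.eulerMascheroniConstant * (z ^ 2 / 2) := by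
  set γ := Real.eulerMascheroniConstant
  have h1 : ∫ x in Set.Ioc (0:ℝ) z, (∑' k, aa x k) =
      ∫ x in Set.Ioc (0:ℝ) z, (Real.log (Real.Gamma x) + Real.log x + γ * x) := by
    apply setIntegral_congr_fun measurableSet_Ioc
    intro x hx
    exact (hasSum_aa hx.1).tsum_eq
  have h2 : ∫ x in Set.Ioc (0:ℝ) z, (Real.log (Real.Gamma x) + Real.log x + γ * x) =
      (∫ x in Set.Ioc (0:ℝ) z, Real.log (Real.Gamma x)) +
      (∫ x in Set.Ioc (0:ℝ) z, Real.log x) + (∫ x in Set.Ioc (0:ℝ) z, γ * x) := by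
    have hfg : IntegrableOn (fun x => Real.log (Real.Gamma x) + Real.log x) (Set.Ioc (0:ℝ) z) :=
      (integrableOn_logGamma hz).add (integrableOn_log_Ioc hz)
    have hid : IntegrableOn (fun x : ℝ => γ * x) (Set.Ioc (0:ℝ) z) :=
      (continuous_const.mul continuous_id).integrableOn_Icc.mono_set Set.Ioc_subset_Icc_self
    rw [integral_add hfg hid, integral_add (integrableOn_logGamma hz) (integrableOn_log_Ioc hz)]
  have h3 : ∀ k : ℕ, ∫ x in Set.Ioc (0:ℝ) z, aa x k = z * aa z k - ll z k := by
    intro k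
    rw [← intervalIntegral.integral_of_le hz.le]
    exact integral_aa hz.le k
  have h4 : ∫ x in Set.Ioc (0:ℝ) z, Real.log x = z * Real.log z - z := by
    rw [← intervalIntegral.integral_of_le hz.le]
    exact integral_log0 hz
  have h5 : ∫ x in Set.Ioc (0:ℝ) z, γ * x = γ * (z ^ 2 / 2) := by
    rw [← intervalIntegral.integral_of_le hz.le]
    rw [intervalIntegral.integral_const_mul]
    rw [integral_id]
    ring
  have h6 := interchange hz
  simp_rw [h3] at h6
  rw [h1, h2, h4, h5] at h6
  rw [intervalIntegral.integral_of_le hz.le]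
  linarith


lemma log_barnesG {z : ℝ} (hz : 0 < z) :
    Real.log (barnesG (1 + z)) = z / 2 * Real.log (2 * π)
      - (z + z ^ 2 * (1 + Real.eulerMascheroniConstant)) / 2 + ∑' k, ll z k := by
  have hw : (1 + z) - 1 = z := by ring
  have hfac : ∀ k : ℕ, (1 + z / ((k : ℝ) + 1)) ^ (k + 1) *
      Real.exp (z ^ 2 / (2 * ((k : ℝ) + 1)) - z) = Real.exp (ll z k) := by
    intro k
    have hk := kpos k
    have hpos : 0 < 1 + z / ((k:ℝ)+1) := by
      have : 0 ≤ z / ((k:ℝ)+1) := div_nonneg hz.le hk.le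
      linarith
    have hll : ll z k = ((k+1 : ℕ) : ℝ) * Real.log (1 + z / ((k:ℝ)+1))
        + (z ^ 2 / (2 * ((k:ℝ)+1)) - z) := by
      rw [ll]; push_cast; ring
    rw [hll, Real.exp_add, Real.exp_nat_mul, Real.exp_log hpos]
  have hprod : ∏' k : ℕ, (1 + z / ((k : ℝ) + 1)) ^ (k + 1) *
      Real.exp (z ^ 2 / (2 * ((k : ℝ) + 1)) - z) = Real.exp (∑' k, ll z k) := by
    have hP : HasProd (fun k => Real.exp (ll z k)) (Real.exp (∑' k, ll z k)) :=
      (summable_ll hz.le).hasSum.rexp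
    rw [tprod_congr hfac]
    exact hP.tprod_eq
  rw [barnesG]
  simp only [hw]
  rw [hprod]
  rw [Real.log_mul (by positivity) (Real.exp_ne_zero _),
    Real.log_mul (by positivity) (Real.exp_ne_zero _),
    Real.log_rpow Real.two_pi_pos, Real.log_exp, Real.log_exp]
  ring


end PsiAux

end PsiAuxSection

/-- Closed form for `ψ⁽⁻²⁾`:
`ψ⁽⁻²⁾(z) = z(1-z)/2 + (z/2) log 2π + z log Γ(z) - log G(1+z)` for `z > 0`. -/
theorem stmt2 (z : ℝ) (hz : 0 < z) :
    psiM2 z = z * (1 - z) / 2 + z / 2 * Real.log (2 * π) +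
      z * Real.log (Real.Gamma z) - Real.log (barnesG (1 + z)) := by
  have hSa := (PsiAux.hasSum_aa hz).tsum_eq
  have hlogΓ : Real.log (Real.Gamma z) = (∑' k, PsiAux.aa z k) - Real.log z
      - Real.eulerMascheroniConstant * z := by linarith
  rw [psiM2, PsiAux.psiM2_series hz, PsiAux.log_barnesG hz, hlogΓ]
  rw [Summable.tsum_sub ((PsiAux.summable_aa hz.le).mul_left z) (PsiAux.summable_ll hz.le),
    tsum_mul_left]
  ring
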